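/- arXiv:1705.04484 — 3 statements merged into one kernel-verified Lean document; each statement's English description precedes it below -/
import Mathlib

section
/- Let G be a finite graph with symmetric edge weights and Ω a finite subset of vertices. The Dirichlet-to-Neumann operator Λ on δΩ satisfies the operator norm bounds ‖Λ‖_{2,2} ≤ 1 and ‖Λ‖_{∞,∞} ≤ 2; that is, for every φ : δΩ → ℝ, Σ_{x∈δΩ} (Λφ)(x)² m_x ≤ Σ_{x∈δΩ} φ(x)² m_x and sup_{x∈δΩ} |Λφ(x)| ≤ 2 sup_{x∈δΩ} |φ(x)|. -/
open scoped Classical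
open Finset

variable {V : Type*} [Fintype V]

/-- The vertex boundary δΩ of a finite set Ω of vertices. -/
noncomputable def bdry (μ : V → V → ℝ) (Ω : Finset V) : Finset V :=
  Finset.univ.filter fun x => x ∉ Ω ∧ ∃ y ∈ Ω, 0 < μ x y

/-- Ω̄ = Ω ∪ δΩ. -/
noncomputable def clos (μ : V → V → ℝ) (Ω : Finset V) : Finset V :=
  Ω ∪ bdry μ Ω

/-- The vertex measure m on Ω̄. -/
noncomputable def vm (μ : V → V → ℝ) (Ω : Finset V) (x : V) : ℝ :=
  if x ∈ Ω then ∑ y, μ x y else ∑ y ∈ Ω, μ x y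

/-- m(B) = Σ_{x ∈ B} m_x. -/
noncomputable def msum (μ : V → V → ℝ) (Ω : Finset V) (B : Finset V) : ℝ :=
  ∑ x ∈ B, vm μ Ω x

/-- Sum over the edges e = {x,y} of E(Ω,Ω̄) of μ_{xy} · F x y (for symmetric F). -/
noncomputable def edgeSum (μ : V → V → ℝ) (Ω : Finset V) (F : V → V → ℝ) : ℝ :=
  (∑ x ∈ Ω, ∑ y ∈ Ω, μ x y * F x y) / 2 +
    ∑ x ∈ Ω, ∑ y ∈ bdry μ Ω, μ x y * F x y

/-- Dirichlet energy D_Ω(f). -/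
noncomputable def dirichlet (μ : V → V → ℝ) (Ω : Finset V) (f : V → ℝ) : ℝ :=
  edgeSum μ Ω fun x y => (f x - f y) ^ 2

/-- Dirichlet form D_Ω(f,g). -/
noncomputable def dform (μ : V → V → ℝ) (Ω : Finset V) (f g : V → ℝ) : ℝ :=
  edgeSum μ Ω fun x y => (f x - f y) * (g x - g y)

/-- μ(∂_Ω A): total weight of the edges of E(Ω,Ω̄) with exactly one endpoint in A. -/
noncomputable def cut (μ : V → V → ℝ) (Ω : Finset V) (A : Finset V) : ℝ :=
  edgeSum μ Ω fun x y => if (x ∈ A) ↔ (y ∈ A) then 0 else 1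

/-- The graph Laplacian Δf(x) (used for x ∈ Ω). -/
noncomputable def lap (μ : V → V → ℝ) (Ω : Finset V) (f : V → ℝ) (x : V) : ℝ :=
  (∑ y, μ x y * (f y - f x)) / vm μ Ω x

/-- The outward normal derivative ∂f/∂n(z) (used for z ∈ δΩ). -/
noncomputable def nderiv (μ : V → V → ℝ) (Ω : Finset V) (f : V → ℝ) (z : V) : ℝ :=
  (∑ x ∈ Ω, μ z x * (f z - f x)) / vm μ Ω z

/-- f is harmonic on Ω. -/
def IsHarmonic (μ : V → V → ℝ) (Ω : Finset V) (u : V → ℝ) : Prop :=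
  ∀ x ∈ Ω, lap μ Ω u x = 0

/-- Adjacency in the graph Ω̃ = (Ω̄, E(Ω,Ω̄)). -/
def tilAdj (μ : V → V → ℝ) (Ω : Finset V) (x y : V) : Prop :=
  0 < μ x y ∧ (x ∈ Ω ∨ y ∈ Ω)

/-- The graph Ω̃ is connected. -/
def TilConnected (μ : V → V → ℝ) (Ω : Finset V) : Prop :=
  ∀ x ∈ clos μ Ω, ∀ y ∈ clos μ Ω, Relation.ReflTransGen (tilAdj μ Ω) x y

/-- λ₁(Ω): the first nontrivial eigenvalue of the Dirichlet-to-Neumann operator,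
characterized by its Rayleigh quotient. -/
noncomputable def lambda1 (μ : V → V → ℝ) (Ω : Finset V) : ℝ :=
  sInf { r : ℝ | ∃ u : V → ℝ, IsHarmonic μ Ω u ∧
    (∑ x ∈ bdry μ Ω, u x ^ 2 * vm μ Ω x) = 1 ∧
    (∑ x ∈ bdry μ Ω, u x * vm μ Ω x) = 0 ∧
    r = dirichlet μ Ω u }

/-- The Escobar-type Cheeger constant h_E(Ω̃). -/
noncomputable def hE (μ : V → V → ℝ) (Ω : Finset V) : ℝ :=
  sInf { r : ℝ | ∃ A : Finset V, A ⊆ clos μ Ω ∧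
    0 < msum μ Ω (A ∩ bdry μ Ω) ∧
    msum μ Ω (A ∩ bdry μ Ω) ≤ msum μ Ω (bdry μ Ω) / 2 ∧
    r = cut μ Ω A / msum μ Ω (A ∩ bdry μ Ω) }

/-- The Jammes-type Cheeger constant h_J(Ω̃). -/
noncomputable def hJ (μ : V → V → ℝ) (Ω : Finset V) : ℝ :=
  sInf { r : ℝ | ∃ A : Finset V, A ⊆ clos μ Ω ∧
    (A ∩ bdry μ Ω).Nonempty ∧
    msum μ Ω A ≤ msum μ Ω (clos μ Ω) / 2 ∧
    r = cut μ Ω A / msum μ Ω (A ∩ bdry μ Ω) }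

/-- The classical Cheeger constant h(Ω̃). -/
noncomputable def cheeger (μ : V → V → ℝ) (Ω : Finset V) : ℝ :=
  sInf { r : ℝ | ∃ A : Finset V, A ⊆ clos μ Ω ∧ A.Nonempty ∧
    msum μ Ω A ≤ msum μ Ω (clos μ Ω) / 2 ∧
    r = cut μ Ω A / msum μ Ω A }

section Aux

variable {V : Type*} [Fintype V]

lemma mem_bdry' {μ : V → V → ℝ} {Ω : Finset V} {x : V} :
    x ∈ bdry μ Ω ↔ x ∉ Ω ∧ ∃ y ∈ Ω, 0 < μ x y := by
  simp [bdry]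

lemma bdry_disj {μ : V → V → ℝ} {Ω : Finset V} {x : V} (hx : x ∈ Ω) : x ∉ bdry μ Ω :=
  fun h => (mem_bdry'.mp h).1 hx

lemma neighbor_clos {μ : V → V → ℝ} {Ω : Finset V} (hsym : ∀ x y, μ x y = μ y x)
    {x y : V} (hx : x ∈ Ω) (hxy : 0 < μ x y) : y ∈ clos μ Ω := by
  by_cases hy : y ∈ Ω
  · exact Finset.mem_union_left _ hy
  · exact Finset.mem_union_right _ (mem_bdry'.mpr ⟨hy, x, hx, by rw [← hsym]; exact hxy⟩)

lemma vm_bdry {μ : V → V → ℝ} {Ω : Finset V} {x : V} (hx : x ∈ bdry μ Ω) :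
    vm μ Ω x = ∑ y ∈ Ω, μ x y := if_neg (mem_bdry'.mp hx).1

lemma harm_zero {μ : V → V → ℝ} {Ω : Finset V} (hm : ∀ x ∈ clos μ Ω, 0 < vm μ Ω x)
    {u : V → ℝ} (hu : IsHarmonic μ Ω u) {x : V} (hx : x ∈ Ω) :
    ∑ y, μ x y * (u y - u x) = 0 := by
  have h0 := hu x hx
  unfold lap at h0
  rcases div_eq_zero_iff.mp h0 with h | h
  · exact h
  · exact absurd h (ne_of_gt (hm x (Finset.mem_union_left _ hx)))

lemma split_sum {μ : V → V → ℝ} {Ω : Finset V} (hsym : ∀ x y, μ x y = μ y x)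
    (hnn : ∀ x y, 0 ≤ μ x y) {x : V} (hx : x ∈ Ω) (f : V → ℝ) :
    ∑ y, μ x y * f y = (∑ y ∈ Ω, μ x y * f y) + ∑ y ∈ bdry μ Ω, μ x y * f y := by
  have hdisj : Disjoint Ω (bdry μ Ω) :=
    Finset.disjoint_left.mpr fun a ha hb => bdry_disj ha hb
  rw [← Finset.sum_union hdisj]
  refine (Finset.sum_subset (Finset.subset_univ _) ?_).symm
  intro y _ hy
  have hμ : μ x y = 0 := by
    by_contra hne
    exact hy (neighbor_clos hsym hx (lt_of_le_of_ne (hnn x y) (Ne.symm hne)))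
  rw [hμ, zero_mul]

end Aux
section Aux2

variable {V : Type*} [Fintype V]

lemma dir_nonneg {μ : V → V → ℝ} {Ω : Finset V} (hnn : ∀ x y, 0 ≤ μ x y) (f : V → ℝ) :
    0 ≤ dirichlet μ Ω f := by
  unfold dirichlet edgeSum
  have h1 : ∀ (s t : Finset V), 0 ≤ ∑ x ∈ s, ∑ y ∈ t, μ x y * (f x - f y) ^ 2 :=
    fun s t => Finset.sum_nonneg fun x _ => Finset.sum_nonneg fun y _ =>
      mul_nonneg (hnn x y) (sq_nonneg _)
  have := h1 Ω Ω; have := h1 Ω (bdry μ Ω)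
  positivity

lemma dir_expand (μ : V → V → ℝ) (Ω : Finset V) (f g : V → ℝ) :
    dirichlet μ Ω (fun v => f v + g v) =
      dirichlet μ Ω f + 2 * dform μ Ω f g + dirichlet μ Ω g := by
  unfold dirichlet dform edgeSum
  have key : ∀ x y : V, μ x y * ((f x + g x) - (f y + g y)) ^ 2
      = μ x y * (f x - f y) ^ 2 + (2 * (μ x y * ((f x - f y) * (g x - g y))) +
        μ x y * (g x - g y) ^ 2) := by intros; ring
  simp only [key, Finset.sum_add_distrib, ← Finset.mul_sum]
  ring

lemma green {μ : V → V → ℝ} {Ω : Finset V} (hsym : ∀ x y, μ x y = μ y x)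
    (hnn : ∀ x y, 0 ≤ μ x y) (hm : ∀ x ∈ clos μ Ω, 0 < vm μ Ω x)
    {u : V → ℝ} (hu : IsHarmonic μ Ω u) (h : V → ℝ)
    (hh : ∀ z ∈ bdry μ Ω, h z = 0) : dform μ Ω u h = 0 := by
  unfold dform edgeSum
  have hIJ : (∑ x ∈ Ω, ∑ y ∈ Ω, μ x y * ((u x - u y) * (h x - h y)))
      = 2 * ∑ x ∈ Ω, ∑ y ∈ Ω, μ x y * ((u x - u y) * h x) := by
    have expand : ∀ x y : V, μ x y * ((u x - u y) * (h x - h y))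
        = μ x y * ((u x - u y) * h x) - μ x y * ((u x - u y) * h y) := by intros; ring
    simp only [expand, Finset.sum_sub_distrib]
    have swap : (∑ x ∈ Ω, ∑ y ∈ Ω, μ x y * ((u x - u y) * h y))
        = -∑ x ∈ Ω, ∑ y ∈ Ω, μ x y * ((u x - u y) * h x) := by
      rw [Finset.sum_comm]
      rw [show (∑ y ∈ Ω, ∑ x ∈ Ω, μ x y * ((u x - u y) * h y))
          = ∑ y ∈ Ω, ∑ x ∈ Ω, -(μ y x * ((u y - u x) * h y)) from
        Finset.sum_congr rfl fun y _ => Finset.sum_congr rfl fun x _ => by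
          rw [hsym x y]; ring]
      simp only [Finset.sum_neg_distrib]
    rw [swap]; ring
  have hB : (∑ x ∈ Ω, ∑ z ∈ bdry μ Ω, μ x z * ((u x - u z) * (h x - h z)))
      = ∑ x ∈ Ω, ∑ z ∈ bdry μ Ω, μ x z * ((u x - u z) * h x) :=
    Finset.sum_congr rfl fun x _ => Finset.sum_congr rfl fun z hz => by
      rw [hh z hz]; ring
  rw [hIJ, hB]
  have key : ∀ x ∈ Ω, ((∑ y ∈ Ω, μ x y * ((u x - u y) * h x)) +
      ∑ z ∈ bdry μ Ω, μ x z * ((u x - u z) * h x)) = 0 := by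
    intro x hx
    have e1 : ∀ s : Finset V, (∑ y ∈ s, μ x y * ((u x - u y) * h x))
        = h x * ∑ y ∈ s, μ x y * (u x - u y) := by
      intro s; rw [Finset.mul_sum]; exact Finset.sum_congr rfl fun y _ => by ring
    rw [e1, e1, ← mul_add, ← split_sum hsym hnn hx (fun y => u x - u y)]
    have h0 : ∑ y, μ x y * (u x - u y) = 0 := by
      have h1 := harm_zero hm hu hx
      have h2 : ∑ y, μ x y * (u x - u y) = -∑ y, μ x y * (u y - u x) := by
        rw [← Finset.sum_neg_distrib]
        exact Finset.sum_congr rfl fun y _ => by ring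
      rw [h2, h1, neg_zero]
    rw [h0, mul_zero]
  have : (∑ x ∈ Ω, ∑ y ∈ Ω, μ x y * ((u x - u y) * h x)) +
      ∑ x ∈ Ω, ∑ z ∈ bdry μ Ω, μ x z * ((u x - u z) * h x) = 0 := by
    rw [← Finset.sum_add_distrib]
    exact Finset.sum_eq_zero key
  linarith

end Aux2
section Aux3

variable {V : Type*} [Fintype V]

lemma maxp {μ : V → V → ℝ} {Ω : Finset V}
    (hsym : ∀ x y, μ x y = μ y x) (hnn : ∀ x y, 0 ≤ μ x y)
    (hm : ∀ x ∈ clos μ Ω, 0 < vm μ Ω x)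
    {u : V → ℝ} (hu : IsHarmonic μ Ω u) {C : ℝ} {z x : V}
    (hz : z ∈ bdry μ Ω) (hC : ∀ y ∈ bdry μ Ω, u y ≤ C)
    (hx : x ∈ Ω) (hμ : 0 < μ z x) : u x ≤ C := by
  classical
  set R : Finset V := (clos μ Ω).filter (fun w => Relation.ReflTransGen (tilAdj μ Ω) z w)
    with hRdef
  have hzR : z ∈ R :=
    Finset.mem_filter.mpr ⟨Finset.mem_union_right _ hz, Relation.ReflTransGen.refl⟩
  have hxR : x ∈ R :=
    Finset.mem_filter.mpr ⟨Finset.mem_union_left _ hx,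
      Relation.ReflTransGen.single ⟨hμ, Or.inr hx⟩⟩
  have hRne : R.Nonempty := ⟨z, hzR⟩
  set M : ℝ := R.sup' hRne u with hMdef
  have hxM : u x ≤ M := Finset.le_sup' u hxR
  have hsymAdj : Symmetric (tilAdj μ Ω) := by
    intro a b hab
    exact ⟨by rw [hsym]; exact hab.1, hab.2.symm⟩
  -- neighbors of Ω-vertices in R stay in R
  have hnb : ∀ a ∈ R, a ∈ Ω → ∀ y, 0 < μ a y → y ∈ R := by
    intro a haR haΩ y hay
    have haz : Relation.ReflTransGen (tilAdj μ Ω) z a := (Finset.mem_filter.mp haR).2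
    exact Finset.mem_filter.mpr ⟨neighbor_clos hsym haΩ hay,
      haz.tail ⟨hay, Or.inl haΩ⟩⟩
  -- at an interior max, all neighbors attain the max
  have hmaxnb : ∀ a ∈ R, a ∈ Ω → u a = M → ∀ y, 0 < μ a y → u y = M := by
    intro a haR haΩ haM y hay
    have h0 : ∑ w, μ a w * (u w - u a) = 0 := harm_zero hm hu haΩ
    have hnonpos : ∀ w ∈ (Finset.univ : Finset V), μ a w * (u w - u a) ≤ 0 := by
      intro w _
      rcases eq_or_lt_of_le (hnn a w) with hw | hw
      · rw [← hw, zero_mul]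
      · have hwR : w ∈ R := hnb a haR haΩ w hw
        have : u w ≤ M := Finset.le_sup' u hwR
        have : u w - u a ≤ 0 := by rw [haM]; linarith
        exact mul_nonpos_of_nonneg_of_nonpos (le_of_lt hw) this
    have hneg : ∀ w ∈ (Finset.univ : Finset V), 0 ≤ -(μ a w * (u w - u a)) :=
      fun w hw => neg_nonneg.mpr (hnonpos w hw)
    have hsum0 : ∑ w, -(μ a w * (u w - u a)) = 0 := by
      rw [Finset.sum_neg_distrib, h0, neg_zero]
    have heach := (Finset.sum_eq_zero_iff_of_nonneg hneg).mp hsum0 y (Finset.mem_univ y)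
    have : μ a y * (u y - u a) = 0 := by linarith
    rcases mul_eq_zero.mp this with h' | h'
    · exact absurd h' (ne_of_gt hay)
    · have : u y = u a := by linarith
      rw [this, haM]
  -- main induction: the max is attained on the boundary
  have main : ∀ a, Relation.ReflTransGen (tilAdj μ Ω) a z → a ∈ R → u a = M → M ≤ C := by
    intro a h
    induction h using Relation.ReflTransGen.head_induction_on with
    | refl => intro _ hMz; rw [← hMz]; exact hC z hz
    | @head a c hstep hrest ih =>
      intro haR haM
      by_cases hab : a ∈ bdry μ Ω
      · rw [← haM]; exact hC a hab
      · have haΩ : a ∈ Ω := by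
          have := (Finset.mem_filter.mp haR).1
          rcases Finset.mem_union.mp this with h' | h'
          · exact h'
          · exact absurd h' hab
        have hμac : 0 < μ a c := hstep.1
        have hcM : u c = M := hmaxnb a haR haΩ haM c hμac
        have hcR : c ∈ R := hnb a haR haΩ c hμac
        exact ih hcR hcM
  obtain ⟨w, hwR, hwM⟩ := Finset.exists_mem_eq_sup' hRne u
  have hwz : Relation.ReflTransGen (tilAdj μ Ω) w z :=
    by haveI : Std.Symm (tilAdj μ Ω) := ⟨hsymAdj⟩
       exact Relation.ReflTransGen.symmetric.symm _ _ (Finset.mem_filter.mp hwR).2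
  exact hxM.trans (main w hwz hwR hwM.symm)

end Aux3

/-- Proposition 3.1: the DtN operator satisfies ‖Λ‖₂,₂ ≤ 1 and ‖Λ‖∞,∞ ≤ 2. -/
theorem stmt_8 (μ : V → V → ℝ) (Ω : Finset V)
    (hsym : ∀ x y, μ x y = μ y x) (hnn : ∀ x y, 0 ≤ μ x y)
    (hm : ∀ x ∈ clos μ Ω, 0 < vm μ Ω x) :
    ∀ u : V → ℝ, IsHarmonic μ Ω u →
      (∑ x ∈ bdry μ Ω, nderiv μ Ω u x ^ 2 * vm μ Ω x) ≤
          (∑ x ∈ bdry μ Ω, u x ^ 2 * vm μ Ω x) ∧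
      ∀ C : ℝ, (∀ y ∈ bdry μ Ω, |u y| ≤ C) →
        ∀ x ∈ bdry μ Ω, |nderiv μ Ω u x| ≤ 2 * C := by
  intro u hu
  constructor
  · -- L² bound
    have stepA : ∀ z ∈ bdry μ Ω,
        nderiv μ Ω u z ^ 2 * vm μ Ω z ≤ ∑ x ∈ Ω, μ z x * (u z - u x) ^ 2 := by
      intro z hz
      have hmz : 0 < vm μ Ω z := hm z (Finset.mem_union_right _ hz)
      have hvz : vm μ Ω z = ∑ y ∈ Ω, μ z y := vm_bdry hz
      have cs : (∑ x ∈ Ω, μ z x * (u z - u x)) ^ 2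
          ≤ (∑ x ∈ Ω, μ z x) * ∑ x ∈ Ω, μ z x * (u z - u x) ^ 2 :=
        Finset.sum_sq_le_sum_mul_sum_of_sq_eq_mul Ω (fun i _ => hnn z i)
          (fun i _ => mul_nonneg (hnn z i) (sq_nonneg _)) (fun i _ => by ring)
      unfold nderiv
      have e : ((∑ x ∈ Ω, μ z x * (u z - u x)) / vm μ Ω z) ^ 2 * vm μ Ω z
          = (∑ x ∈ Ω, μ z x * (u z - u x)) ^ 2 / vm μ Ω z := by
        field_simp
      rw [e, div_le_iff₀ hmz]
      calc (∑ x ∈ Ω, μ z x * (u z - u x)) ^ 2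
          ≤ (∑ x ∈ Ω, μ z x) * ∑ x ∈ Ω, μ z x * (u z - u x) ^ 2 := cs
        _ = (∑ x ∈ Ω, μ z x * (u z - u x) ^ 2) * vm μ Ω z := by rw [hvz, mul_comm]
    have stepB : (∑ z ∈ bdry μ Ω, ∑ x ∈ Ω, μ z x * (u z - u x) ^ 2) ≤ dirichlet μ Ω u := by
      unfold dirichlet edgeSum
      have e : (∑ z ∈ bdry μ Ω, ∑ x ∈ Ω, μ z x * (u z - u x) ^ 2)
          = ∑ x ∈ Ω, ∑ z ∈ bdry μ Ω, μ x z * (u x - u z) ^ 2 := by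
        rw [Finset.sum_comm]
        exact Finset.sum_congr rfl fun x _ => Finset.sum_congr rfl fun z _ => by
          rw [hsym z x]; ring
      rw [e]
      have hpos : 0 ≤ (∑ x ∈ Ω, ∑ y ∈ Ω, μ x y * (u x - u y) ^ 2) / 2 :=
        div_nonneg (Finset.sum_nonneg fun x _ => Finset.sum_nonneg fun y _ =>
          mul_nonneg (hnn x y) (sq_nonneg _)) (by norm_num)
      linarith
    have stepC : dirichlet μ Ω u ≤ ∑ z ∈ bdry μ Ω, u z ^ 2 * vm μ Ω z := by
      classical
      set h : V → ℝ := fun v => if v ∈ bdry μ Ω then 0 else -(u v) with hhdef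
      have hh0 : ∀ z ∈ bdry μ Ω, h z = 0 := fun z hz => if_pos hz
      have hG : dform μ Ω u h = 0 := green hsym hnn hm hu h hh0
      have hexp := dir_expand μ Ω u h
      have hng : 0 ≤ dirichlet μ Ω h := dir_nonneg hnn h
      have hΩ0 : ∀ x ∈ Ω, u x + h x = 0 := by
        intro x hx
        have : h x = -(u x) := if_neg (bdry_disj hx)
        rw [this]; ring
      have hval : dirichlet μ Ω (fun v => u v + h v) = ∑ z ∈ bdry μ Ω, u z ^ 2 * vm μ Ω z := by
        unfold dirichlet edgeSum
        have i0 : (∑ x ∈ Ω, ∑ y ∈ Ω, μ x y * ((u x + h x) - (u y + h y)) ^ 2) = 0 :=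
          Finset.sum_eq_zero fun x hx => Finset.sum_eq_zero fun y hy => by
            rw [hΩ0 x hx, hΩ0 y hy]; ring
        rw [i0]
        have b1 : (∑ x ∈ Ω, ∑ z ∈ bdry μ Ω, μ x z * ((u x + h x) - (u z + h z)) ^ 2)
            = ∑ z ∈ bdry μ Ω, u z ^ 2 * vm μ Ω z := by
          rw [Finset.sum_comm]
          refine Finset.sum_congr rfl fun z hz => ?_
          rw [vm_bdry hz, Finset.mul_sum]
          refine Finset.sum_congr rfl fun x hx => ?_
          rw [hΩ0 x hx, hh0 z hz, hsym x z]; ring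
        rw [b1]; ring
      linarith
    calc (∑ z ∈ bdry μ Ω, nderiv μ Ω u z ^ 2 * vm μ Ω z)
        ≤ ∑ z ∈ bdry μ Ω, ∑ x ∈ Ω, μ z x * (u z - u x) ^ 2 :=
          Finset.sum_le_sum stepA
      _ ≤ dirichlet μ Ω u := stepB
      _ ≤ ∑ z ∈ bdry μ Ω, u z ^ 2 * vm μ Ω z := stepC
  · -- L∞ bound
    intro C hC x hx
    have hmx : 0 < vm μ Ω x := hm x (Finset.mem_union_right _ hx)
    have hvx : vm μ Ω x = ∑ y ∈ Ω, μ x y := vm_bdry hx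
    have huneg : IsHarmonic μ Ω (fun v => -(u v)) := by
      intro a ha
      have h0 : ∑ y, μ a y * (-(u y) - -(u a)) = 0 := by
        have h1 := harm_zero hm hu ha
        have h2 : ∑ y, μ a y * (-(u y) - -(u a)) = -∑ y, μ a y * (u y - u a) := by
          rw [← Finset.sum_neg_distrib]
          exact Finset.sum_congr rfl fun y _ => by ring
        rw [h2, h1, neg_zero]
      unfold lap
      rw [h0, zero_div]
    have hterm : ∀ y ∈ Ω, |μ x y * (u x - u y)| ≤ μ x y * (2 * C) := by
      intro y hy
      rcases eq_or_lt_of_le (hnn x y) with hμ | hμ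
      · rw [← hμ]; simp
      · have hyC : |u y| ≤ C := by
          refine abs_le.mpr ⟨?_, maxp hsym hnn hm hu hx
            (fun b hb => le_of_abs_le (hC b hb)) hy hμ⟩
          have hneg := maxp hsym hnn hm huneg hx
            (fun b hb => neg_le.mp ((abs_le.mp (hC b hb)).1)) hy hμ
          -- hneg : -(u y) ≤ C
          linarith
        have hxC : |u x| ≤ C := hC x hx
        rw [abs_mul, abs_of_pos hμ]
        have : |u x - u y| ≤ 2 * C := by
          have := abs_sub (u x) (u y)
          have h1 := abs_le.mp hxC
          have h2 := abs_le.mp hyC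
          rw [abs_le]; constructor <;> [linarith [h1.1, h2.2]; linarith [h1.2, h2.1]]
        exact mul_le_mul_of_nonneg_left this (le_of_lt hμ)
    unfold nderiv
    rw [abs_div, abs_of_pos hmx, div_le_iff₀ hmx]
    calc |∑ y ∈ Ω, μ x y * (u x - u y)|
        ≤ ∑ y ∈ Ω, |μ x y * (u x - u y)| := Finset.abs_sum_le_sum_abs _ _
      _ ≤ ∑ y ∈ Ω, μ x y * (2 * C) := Finset.sum_le_sum hterm
      _ = (∑ y ∈ Ω, μ x y) * (2 * C) := by rw [← Finset.sum_mul]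
      _ = 2 * C * vm μ Ω x := by rw [hvx, mul_comm]
end

section
/- Let G be a finite graph with symmetric edge weights and Ω a finite subset of vertices. Then the Jammes-type Cheeger constant is at most the Escobar-type Cheeger constant: h_J(Ω̃) ≤ h_E(Ω̃). -/
open scoped Classical
open Finset

variable {V : Type*} [Fintype V]

private lemma vm_nonneg' (μ : V → V → ℝ) (Ω : Finset V) (hnn : ∀ x y, 0 ≤ μ x y) (x : V) :
    0 ≤ vm μ Ω x := by
  unfold vm; split <;> exact Finset.sum_nonneg fun y _ => hnn x y

private lemma msum_nonneg' (μ : V → V → ℝ) (Ω : Finset V) (hnn : ∀ x y, 0 ≤ μ x y)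
    (B : Finset V) : 0 ≤ msum μ Ω B :=
  Finset.sum_nonneg fun x _ => vm_nonneg' μ Ω hnn x

private lemma cut_nonneg' (μ : V → V → ℝ) (Ω : Finset V) (hnn : ∀ x y, 0 ≤ μ x y)
    (A : Finset V) : 0 ≤ cut μ Ω A := by
  unfold cut edgeSum
  have h1 : ∀ (s t : Finset V),
      0 ≤ ∑ x ∈ s, ∑ y ∈ t, μ x y * (if (x ∈ A) ↔ (y ∈ A) then (0:ℝ) else 1) := by
    intro s t
    refine Finset.sum_nonneg fun x _ => Finset.sum_nonneg fun y _ => mul_nonneg (hnn x y) ?_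
    split <;> norm_num
  have := h1 Ω Ω; have := h1 Ω (bdry μ Ω); linarith

private lemma vm_pos_of_bdry' (μ : V → V → ℝ) (Ω : Finset V) (hnn : ∀ x y, 0 ≤ μ x y)
    {z : V} (hz : z ∈ bdry μ Ω) : 0 < vm μ Ω z := by
  simp only [bdry, Finset.mem_filter] at hz
  obtain ⟨-, hzΩ, y, hy, hμ⟩ := hz
  unfold vm; rw [if_neg hzΩ]
  exact Finset.sum_pos' (fun y _ => hnn z y) ⟨y, hy, hμ⟩

private lemma cut_compl' (μ : V → V → ℝ) (Ω : Finset V) (A : Finset V) :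
    cut μ Ω (clos μ Ω \ A) = cut μ Ω A := by
  have hΩc : Ω ⊆ clos μ Ω := by unfold clos; exact Finset.subset_union_left
  have hδc : bdry μ Ω ⊆ clos μ Ω := by unfold clos; exact Finset.subset_union_right
  have key : ∀ x ∈ clos μ Ω, ∀ y ∈ clos μ Ω,
      (if (x ∈ clos μ Ω \ A) ↔ (y ∈ clos μ Ω \ A) then (0:ℝ) else 1)
        = (if (x ∈ A) ↔ (y ∈ A) then (0:ℝ) else 1) := by
    intro x hx y hy
    simp [Finset.mem_sdiff, hx, hy, not_iff_not]
  unfold cut edgeSum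
  congr 1
  · congr 1
    refine Finset.sum_congr rfl fun x hx => Finset.sum_congr rfl fun y hy => ?_
    exact congrArg (μ x y * ·) (key x (hΩc hx) y (hΩc hy))
  · refine Finset.sum_congr rfl fun x hx => Finset.sum_congr rfl fun y hy => ?_
    exact congrArg (μ x y * ·) (key x (hΩc hx) y (hδc hy))

/-- Proposition 4.1: h_J(Ω̃) ≤ h_E(Ω̃). -/
theorem stmt_14 (μ : V → V → ℝ) (Ω : Finset V)
    (hsym : ∀ x y, μ x y = μ y x) (hnn : ∀ x y, 0 ≤ μ x y)
    (hconn : TilConnected μ Ω) (hcard : 2 ≤ (bdry μ Ω).card) :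
    hJ μ Ω ≤ hE μ Ω := by
  classical
  have hvm := vm_nonneg' μ Ω hnn
  have hmsnn := msum_nonneg' μ Ω hnn
  have hcutnn := cut_nonneg' μ Ω hnn
  have hδc : bdry μ Ω ⊆ clos μ Ω := by unfold clos; exact Finset.subset_union_right
  -- the Jammes set is bounded below by 0
  have hbdd : BddBelow { r : ℝ | ∃ A : Finset V, A ⊆ clos μ Ω ∧
      (A ∩ bdry μ Ω).Nonempty ∧ msum μ Ω A ≤ msum μ Ω (clos μ Ω) / 2 ∧
      r = cut μ Ω A / msum μ Ω (A ∩ bdry μ Ω) } := by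
    refine ⟨0, ?_⟩
    rintro r ⟨A, -, -, -, rfl⟩
    exact div_nonneg (hcutnn A) (hmsnn _)
  -- the Escobar set is nonempty
  obtain ⟨z, hz, hzmin⟩ := Finset.exists_min_image (bdry μ Ω) (vm μ Ω)
    (Finset.card_pos.mp (by omega))
  obtain ⟨a, ha, b, hb, hab⟩ := Finset.one_lt_card.mp (by omega : 1 < (bdry μ Ω).card)
  obtain ⟨w, hw, hwz⟩ : ∃ w ∈ bdry μ Ω, w ≠ z := by
    by_cases h : a = z
    · exact ⟨b, hb, by rw [← h]; exact fun hbz => hab hbz.symm⟩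
    · exact ⟨a, ha, h⟩
  have hsub : {z, w} ⊆ bdry μ Ω := by
    intro t ht
    simp only [Finset.mem_insert, Finset.mem_singleton] at ht
    rcases ht with rfl | rfl <;> assumption
  have hsum2 : vm μ Ω z + vm μ Ω w ≤ msum μ Ω (bdry μ Ω) := by
    have := Finset.sum_le_sum_of_subset_of_nonneg hsub (fun x _ _ => hvm x)
    rwa [Finset.sum_pair (Ne.symm hwz)] at this
  have hzw : vm μ Ω z ≤ vm μ Ω w := hzmin w hw
  have hzpos : 0 < vm μ Ω z := vm_pos_of_bdry' μ Ω hnn hz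
  have hzinter : ({z} : Finset V) ∩ bdry μ Ω = {z} := by
    rw [Finset.singleton_inter_of_mem hz]
  have hzms : msum μ Ω ({z} : Finset V) = vm μ Ω z := Finset.sum_singleton _ _
  have hEne : Set.Nonempty { r : ℝ | ∃ A : Finset V, A ⊆ clos μ Ω ∧
      0 < msum μ Ω (A ∩ bdry μ Ω) ∧
      msum μ Ω (A ∩ bdry μ Ω) ≤ msum μ Ω (bdry μ Ω) / 2 ∧
      r = cut μ Ω A / msum μ Ω (A ∩ bdry μ Ω) } := by
    refine ⟨cut μ Ω {z} / msum μ Ω ({z} ∩ bdry μ Ω), {z}, ?_, ?_, ?_, rfl⟩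
    · exact Finset.singleton_subset_iff.mpr (hδc hz)
    · rw [hzinter, hzms]; exact hzpos
    · rw [hzinter, hzms]; linarith
  unfold hJ hE
  refine le_csInf hEne ?_
  rintro r ⟨A, hA, hpos, hhalf, rfl⟩
  have hAne : (A ∩ bdry μ Ω).Nonempty := by
    rw [Finset.nonempty_iff_ne_empty]
    intro h
    rw [h] at hpos
    simp [msum] at hpos
  by_cases hc : msum μ Ω A ≤ msum μ Ω (clos μ Ω) / 2
  · exact csInf_le hbdd ⟨A, hA, hAne, hc, rfl⟩
  · set B := clos μ Ω \ A with hB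
    have hBδ : B ∩ bdry μ Ω = bdry μ Ω \ A := by
      ext t
      simp only [hB, Finset.mem_inter, Finset.mem_sdiff]
      constructor
      · rintro ⟨⟨-, h2⟩, h3⟩; exact ⟨h3, h2⟩
      · rintro ⟨h3, h2⟩; exact ⟨⟨hδc h3, h2⟩, h3⟩
    have hsplitδ : msum μ Ω (A ∩ bdry μ Ω) + msum μ Ω (bdry μ Ω \ A)
        = msum μ Ω (bdry μ Ω) := by
      rw [Finset.inter_comm]
      exact Finset.sum_inter_add_sum_sdiff _ _ _
    have hsplitc : msum μ Ω A + msum μ Ω B = msum μ Ω (clos μ Ω) := by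
      have h := Finset.sum_inter_add_sum_sdiff (clos μ Ω) A (vm μ Ω)
      rwa [Finset.inter_eq_right.mpr hA] at h
    have hBhalf : msum μ Ω B ≤ msum μ Ω (clos μ Ω) / 2 := by
      push_neg at hc; linarith
    have hmle : msum μ Ω (A ∩ bdry μ Ω) ≤ msum μ Ω (B ∩ bdry μ Ω) := by
      rw [hBδ]; linarith
    have hm'pos : 0 < msum μ Ω (B ∩ bdry μ Ω) := lt_of_lt_of_le hpos hmle
    have hBne : (B ∩ bdry μ Ω).Nonempty := by
      rw [Finset.nonempty_iff_ne_empty]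
      intro h
      rw [h] at hm'pos
      simp [msum] at hm'pos
    have hstep : hJ μ Ω ≤ cut μ Ω B / msum μ Ω (B ∩ bdry μ Ω) :=
      csInf_le hbdd ⟨B, Finset.sdiff_subset, hBne, hBhalf, rfl⟩
    refine hstep.trans ?_
    rw [hB, cut_compl' μ Ω A, div_le_div_iff₀ hm'pos hpos]
    exact mul_le_mul_of_nonneg_left hmle (hcutnn A)
end

section
/- Let G be a finite graph with symmetric edge weights, Ω a finite subset of vertices with Ω̃ connected, and g : Ω̄ → ℝ a nonnegative function supported on Ω̄⁺ = {x ∈ Ω̄ : g(x) > 0}. Then ( Σ_{x∈Ω̄⁺} g(x)² m_x ) · ( Σ_{e={x,y} ∈ E(Ω̄⁺,Ω̄)} μ_{xy} (g(y) − g(x))² ) ≥ ½ ( Σ_{e={x,y} ∈ E(Ω̄⁺,Ω̄)} μ_{xy} |g(x)² − g(y)²| )², where E(Ω̄⁺,Ω̄) denotes the set of edges of E(Ω,Ω̄) with at least one endpoint in Ω̄⁺. (In particular, Σ_{x∈Ω̄⁺} g(x)² m_x = Σ_{e={x,y} ∈ E(Ω̄⁺,Ω̄)} μ_{xy}(g(x)²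 + g(y)²).) -/
open scoped Classical
open Finset

variable {V : Type*} [Fintype V]

/-- Sum over the edges e = {x,y} of E(Ω,Ω̄) having at least one endpoint in P
of μ_{xy} · F x y (for symmetric F); used for the edge set E(Ω̄⁺,Ω̄). -/
noncomputable def edgeSumOn (μ : V → V → ℝ) (Ω : Finset V) (P : Finset V)
    (F : V → V → ℝ) : ℝ :=
  (∑ x ∈ Ω, ∑ y ∈ Ω, if x ∈ P ∨ y ∈ P then μ x y * F x y else 0) / 2 +
    ∑ x ∈ Ω, ∑ y ∈ bdry μ Ω, if x ∈ P ∨ y ∈ P then μ x y * F x y else 0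

section aux53

/-- Weight of an ordered pair in `edgeSumOn`. -/
noncomputable def eW (μ : V → V → ℝ) (Ω P : Finset V) (x y : V) : ℝ :=
  (if x ∈ Ω ∧ y ∈ Ω ∧ (x ∈ P ∨ y ∈ P) then μ x y / 2 else 0) +
    (if x ∈ Ω ∧ y ∈ bdry μ Ω ∧ (x ∈ P ∨ y ∈ P) then μ x y else 0)

lemma eW_nonneg (μ : V → V → ℝ) (Ω P : Finset V) (hnn : ∀ x y, 0 ≤ μ x y) (x y : V) :
    0 ≤ eW μ Ω P x y := by
  unfold eW; split_ifs <;> nlinarith [hnn x y]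

lemma double_ext (s t : Finset V) (f : V → V → ℝ) :
    ∑ x ∈ s, ∑ y ∈ t, f x y = ∑ x, ∑ y, if x ∈ s ∧ y ∈ t then f x y else 0 := by
  rw [← Finset.sum_product' (s := s) (t := t), ← Finset.sum_product' (s := univ) (t := univ)]
  rw [← Finset.sum_filter]
  refine (Finset.sum_congr ?_ fun _ _ => rfl).symm
  ext p
  simp [Finset.mem_filter, Finset.mem_product]

lemma edgeSumOn_eq (μ : V → V → ℝ) (Ω P : Finset V) (F : V → V → ℝ) :
    edgeSumOn μ Ω P F = ∑ x, ∑ y, eW μ Ω P x y * F x y := by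
  unfold edgeSumOn eW
  rw [double_ext Ω Ω, double_ext Ω (bdry μ Ω), Finset.sum_div, ← Finset.sum_add_distrib]
  refine Finset.sum_congr rfl fun x _ => ?_
  rw [Finset.sum_div, ← Finset.sum_add_distrib]
  refine Finset.sum_congr rfl fun y _ => ?_
  have hdy : y ∈ bdry μ Ω → y ∉ Ω := fun hz => (Finset.mem_filter.mp hz).2.1
  split_ifs <;> first | ring1 | (exfalso; tauto)

lemma mu_zero_outside (μ : V → V → ℝ) (Ω : Finset V)
    (hsym : ∀ x y, μ x y = μ y x) (hnn : ∀ x y, 0 ≤ μ x y)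
    {x y : V} (hx : x ∈ Ω) (hy : y ∉ clos μ Ω) : μ x y = 0 := by
  by_contra h
  have hpos : 0 < μ x y := lt_of_le_of_ne (hnn x y) (Ne.symm h)
  apply hy
  have hyΩ : y ∉ Ω := fun h' => hy (Finset.mem_union_left _ h')
  refine Finset.mem_union_right _ ?_
  simp only [bdry, Finset.mem_filter, Finset.mem_univ, true_and]
  exact ⟨hyΩ, x, hx, by rw [hsym]; exact hpos⟩

end aux53

/-- Lemma 5.3: for a nonnegative g supported on Ω̄⁺ = {g > 0},
(Σ_{x∈Ω̄⁺} g(x)² m_x) · (Σ_{E(Ω̄⁺,Ω̄)} μ_{xy}(g(y) − g(x))²)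
  ≥ ½ (Σ_{E(Ω̄⁺,Ω̄)} μ_{xy}|g(x)² − g(y)²|)²,
where moreover Σ_{x∈Ω̄⁺} g(x)² m_x = Σ_{E(Ω̄⁺,Ω̄)} μ_{xy}(g(x)² + g(y)²). -/
theorem stmt_19 (μ : V → V → ℝ) (Ω : Finset V)
    (hsym : ∀ x y, μ x y = μ y x) (hnn : ∀ x y, 0 ≤ μ x y)
    (hconn : TilConnected μ Ω)
    (g : V → ℝ) (hg : ∀ x, 0 ≤ g x) :
    (∑ x ∈ (clos μ Ω).filter (fun x => 0 < g x), g x ^ 2 * vm μ Ω x) =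
        edgeSumOn μ Ω ((clos μ Ω).filter (fun x => 0 < g x))
          (fun x y => g x ^ 2 + g y ^ 2) ∧
    (∑ x ∈ (clos μ Ω).filter (fun x => 0 < g x), g x ^ 2 * vm μ Ω x) *
        edgeSumOn μ Ω ((clos μ Ω).filter (fun x => 0 < g x))
          (fun x y => (g y - g x) ^ 2) ≥
      (1 / 2) * (edgeSumOn μ Ω ((clos μ Ω).filter (fun x => 0 < g x))
          (fun x y => |g x ^ 2 - g y ^ 2|)) ^ 2 := by
  classical
  set P : Finset V := (clos μ Ω).filter (fun x => 0 < g x) with hP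
  have hgz : ∀ x ∈ clos μ Ω, x ∉ P → g x = 0 := by
    intro x hx hxP
    by_contra h
    exact hxP (Finset.mem_filter.mpr ⟨hx, lt_of_le_of_ne (hg x) (Ne.symm h)⟩)
  have hΩclos : ∀ x, x ∈ Ω → x ∈ clos μ Ω := fun x hx => Finset.mem_union_left _ hx
  have hbclos : ∀ x, x ∈ bdry μ Ω → x ∈ clos μ Ω := fun x hx => Finset.mem_union_right _ hx
  have hbno : ∀ x, x ∈ bdry μ Ω → x ∉ Ω := fun x hx => (Finset.mem_filter.mp hx).2.1
  have hdisj : Disjoint Ω (bdry μ Ω) := Finset.disjoint_left.mpr fun a ha hb => hbno a hb ha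
  set w0 : V → V → ℝ := fun x y =>
    (if x ∈ Ω ∧ y ∈ Ω then μ x y / 2 else 0) +
      (if x ∈ Ω ∧ y ∈ bdry μ Ω then μ x y else 0) with hw0def
  have hw : ∀ x y, (x ∈ P ∨ y ∈ P) → eW μ Ω P x y = w0 x y := by
    intro x y h
    unfold eW
    simp only [hw0def]
    split_ifs <;> first | ring1 | (exfalso; tauto)
  have hsum1 : ∀ x, ∑ y, w0 x y =
      (if x ∈ Ω then (∑ y ∈ Ω, μ x y) / 2 + ∑ y ∈ bdry μ Ω, μ x y else 0) := by
    intro x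
    by_cases hxo : x ∈ Ω
    · simp only [hw0def, hxo, true_and, if_pos]
      rw [Finset.sum_add_distrib]
      congr 1
      · rw [Finset.sum_ite_mem, Finset.univ_inter, Finset.sum_div]
      · rw [Finset.sum_ite_mem, Finset.univ_inter]
    · simp [hw0def, hxo]
  have hsum2 : ∀ x, ∑ z, w0 z x =
      (if x ∈ Ω then (∑ z ∈ Ω, μ z x) / 2 else 0) +
        (if x ∈ bdry μ Ω then ∑ z ∈ Ω, μ z x else 0) := by
    intro x
    simp only [hw0def]
    rw [Finset.sum_add_distrib]
    congr 1
    · by_cases hxo : x ∈ Ω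
      · simp only [hxo, and_true, if_pos]
        rw [Finset.sum_ite_mem, Finset.univ_inter, Finset.sum_div]
      · simp [hxo]
    · by_cases hxb : x ∈ bdry μ Ω
      · simp only [hxb, and_true, if_pos]
        rw [Finset.sum_ite_mem, Finset.univ_inter]
      · simp [hxb]
  have hvm : ∀ x ∈ clos μ Ω, (∑ y, w0 x y) + (∑ z, w0 z x) = vm μ Ω x := by
    intro x hxc
    rw [hsum1 x, hsum2 x]
    have hzz : (∑ z ∈ Ω, μ z x) = ∑ y ∈ Ω, μ x y :=
      Finset.sum_congr rfl fun z _ => hsym z x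
    rcases Finset.mem_union.mp hxc with hxo | hxb
    · have hxb' : x ∉ bdry μ Ω := fun h => hbno x h hxo
      rw [if_pos hxo, if_pos hxo, if_neg hxb', add_zero, hzz]
      have hre : (∑ y ∈ Ω, μ x y) / 2 + ∑ y ∈ bdry μ Ω, μ x y + (∑ y ∈ Ω, μ x y) / 2
          = ∑ y ∈ Ω ∪ bdry μ Ω, μ x y := by
        rw [Finset.sum_union hdisj]; ring
      rw [hre, vm, if_pos hxo]
      refine Finset.sum_subset (Finset.subset_univ _) fun y _ hy => ?_
      exact mu_zero_outside μ Ω hsym hnn hxo hy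
    · have hxo : x ∉ Ω := hbno x hxb
      simp [hxo, hxb, hzz, vm]
  -- Part 1
  have part1 : (∑ x ∈ P, g x ^ 2 * vm μ Ω x) =
      edgeSumOn μ Ω P (fun x y => g x ^ 2 + g y ^ 2) := by
    rw [edgeSumOn_eq]
    have key1 : ∀ x y : V, eW μ Ω P x y * (g x ^ 2 + g y ^ 2) =
        (if x ∈ P then g x ^ 2 * w0 x y else 0) +
          (if y ∈ P then g y ^ 2 * w0 x y else 0) := by
      intro x y
      by_cases hd : x ∈ P ∨ y ∈ P
      · rw [hw x y hd]
        by_cases hxo : x ∈ Ω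
        · by_cases hyc : y ∈ clos μ Ω
          · by_cases hxp : x ∈ P <;> by_cases hyp : y ∈ P <;>
              simp only [hxp, hyp, if_pos, if_neg, not_false_iff] <;>
              first
                | ring1
                | (rw [hgz x (hΩclos x hxo) hxp]; ring1)
                | (rw [hgz y hyc hyp]; ring1)
                | (rw [hgz x (hΩclos x hxo) hxp, hgz y hyc hyp]; ring1)
          · have h1 : y ∉ Ω := fun h => hyc (hΩclos y h)
            have h2 : y ∉ bdry μ Ω := fun h => hyc (hbclos y h)
            have hz : w0 x y = 0 := by simp [hw0def, h1, h2]
            rw [hz]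
            split_ifs <;> ring1
        · have hz : w0 x y = 0 := by simp [hw0def, hxo]
          rw [hz]
          split_ifs <;> ring1
      · push_neg at hd
        have hz : eW μ Ω P x y = 0 := by
          unfold eW
          rw [if_neg (fun h => by tauto), if_neg (fun h => by tauto)]
          ring1
        rw [hz, if_neg hd.1, if_neg hd.2]
        ring1
    simp only [key1]
    have pull : ∀ (c : Prop) [Decidable c] (f : V → ℝ),
        (∑ y, if c then f y else 0) = if c then ∑ y, f y else 0 := by
      intro c _ f; split_ifs <;> simp
    have split : (∑ x, ∑ y, ((if x ∈ P then g x ^ 2 * w0 x y else 0) +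
        (if y ∈ P then g y ^ 2 * w0 x y else 0))) =
        (∑ x, ∑ y, if x ∈ P then g x ^ 2 * w0 x y else 0) +
        (∑ x, ∑ y, if y ∈ P then g y ^ 2 * w0 x y else 0) := by
      rw [← Finset.sum_add_distrib]
      exact Finset.sum_congr rfl fun x _ => by rw [Finset.sum_add_distrib]
    rw [split, Finset.sum_comm (f := fun x y => if y ∈ P then g y ^ 2 * w0 x y else 0)]
    have h1 : (∑ x, ∑ y, if x ∈ P then g x ^ 2 * w0 x y else 0)
        = ∑ x ∈ P, g x ^ 2 * ∑ y, w0 x y := by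
      simp only [pull, ← Finset.mul_sum]
      rw [Finset.sum_ite_mem, Finset.univ_inter]
    have h2 : (∑ y, ∑ x, if y ∈ P then g y ^ 2 * w0 x y else 0)
        = ∑ y ∈ P, g y ^ 2 * ∑ x, w0 x y := by
      simp only [pull, ← Finset.mul_sum]
      rw [Finset.sum_ite_mem, Finset.univ_inter]
    rw [h1, h2, ← Finset.sum_add_distrib]
    refine Finset.sum_congr rfl fun x hx => ?_
    have hxc : x ∈ clos μ Ω := (Finset.mem_filter.mp hx).1
    rw [← hvm x hxc]
    ring1
  refine ⟨part1, ?_⟩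
  have hconv : ∀ f : V → V → ℝ, (∑ p : V × V, f p.1 p.2) = ∑ x, ∑ y, f x y := by
    intro f
    rw [← Finset.univ_product_univ, Finset.sum_product']
  have hWnn : ∀ p : V × V, 0 ≤ eW μ Ω P p.1 p.2 := fun p => eW_nonneg μ Ω P hnn p.1 p.2
  set a : V × V → ℝ := fun p => Real.sqrt (eW μ Ω P p.1 p.2) * |g p.1 - g p.2| with hadef
  set b : V × V → ℝ := fun p => Real.sqrt (eW μ Ω P p.1 p.2) * (g p.1 + g p.2) with hbdef
  have key := Finset.sum_mul_sq_le_sq_mul_sq Finset.univ a b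
  have eab : (∑ p : V × V, a p * b p) =
      edgeSumOn μ Ω P (fun x y => |g x ^ 2 - g y ^ 2|) := by
    rw [edgeSumOn_eq, ← hconv]
    refine Finset.sum_congr rfl fun p _ => ?_
    have habs : |g p.1 ^ 2 - g p.2 ^ 2| = |g p.1 - g p.2| * (g p.1 + g p.2) := by
      have h1 : g p.1 ^ 2 - g p.2 ^ 2 = (g p.1 - g p.2) * (g p.1 + g p.2) := by ring
      rw [h1, abs_mul, abs_of_nonneg (add_nonneg (hg p.1) (hg p.2))]
    rw [hadef, hbdef, habs,
      show (Real.sqrt (eW μ Ω P p.1 p.2) * |g p.1 - g p.2|) *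
          (Real.sqrt (eW μ Ω P p.1 p.2) * (g p.1 + g p.2)) =
        (Real.sqrt (eW μ Ω P p.1 p.2) * Real.sqrt (eW μ Ω P p.1 p.2)) *
          (|g p.1 - g p.2| * (g p.1 + g p.2)) from by ring,
      Real.mul_self_sqrt (hWnn p)]
  have ea2 : (∑ p : V × V, a p ^ 2) =
      edgeSumOn μ Ω P (fun x y => (g y - g x) ^ 2) := by
    rw [edgeSumOn_eq, ← hconv]
    refine Finset.sum_congr rfl fun p _ => ?_
    rw [hadef, mul_pow, Real.sq_sqrt (hWnn p), sq_abs]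
    ring
  have eb2 : (∑ p : V × V, b p ^ 2) ≤
      2 * edgeSumOn μ Ω P (fun x y => g x ^ 2 + g y ^ 2) := by
    rw [edgeSumOn_eq, ← hconv, Finset.mul_sum]
    refine Finset.sum_le_sum fun p _ => ?_
    rw [hbdef, mul_pow, Real.sq_sqrt (hWnn p)]
    have h2 : (g p.1 + g p.2) ^ 2 ≤ 2 * (g p.1 ^ 2 + g p.2 ^ 2) := by
      nlinarith [sq_nonneg (g p.1 - g p.2)]
    nlinarith [hWnn p, mul_le_mul_of_nonneg_left h2 (hWnn p)]
  have hDnn : 0 ≤ edgeSumOn μ Ω P (fun x y => (g y - g x) ^ 2) := by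
    rw [← ea2]
    exact Finset.sum_nonneg fun p _ => sq_nonneg _
  have hSnn : 0 ≤ (∑ x ∈ P, g x ^ 2 * vm μ Ω x) := by
    rw [part1, edgeSumOn_eq]
    refine Finset.sum_nonneg fun x _ => Finset.sum_nonneg fun y _ => ?_
    have := eW_nonneg μ Ω P hnn x y
    positivity
  rw [eab, ea2] at key
  have hb2 := eb2
  have step : (edgeSumOn μ Ω P (fun x y => |g x ^ 2 - g y ^ 2|)) ^ 2 ≤
      edgeSumOn μ Ω P (fun x y => (g y - g x) ^ 2) *
        (2 * edgeSumOn μ Ω P (fun x y => g x ^ 2 + g y ^ 2)) :=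
    key.trans (mul_le_mul_of_nonneg_left hb2 hDnn)
  rw [← part1] at step
  nlinarith [step]
end
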